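/- Let n ≥ 1 be an integer, h = 1/(n+1), and let Σ_a : [0,1]³ → ℝ be a measurable function with 0 < Σ_min ≤ Σ_a(x) ≤ Σ_max for all x ∈ [0,1]³. Define the n³×n³ real matrix A by A_{(i,j,k),(i',j',k')} = ∫_{[0,1]³} Σ_a(x,y,z) φ_{ijk} φ_{i'j'k'}. Then A is symmetric positive definite and every eigenvalue λ of A satisfies Σ_min·h³/27 ≤ λ ≤ Σ_max·h³; in particular the condition number of A is at most 27·Σ_max/Σ_min, independent of n. -/

import Mathlib

open MeasureTheory Matrix


lemma quad_int (α β A B C : ℝ) :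
    ∫ t in α..β, (A + B*t + C*t^2) = A*(β-α) + B*(β^2-α^2)/2 + C*(β^3-α^3)/3 := by
  have h1 : ∀ r : ℝ, IntervalIntegrable (fun t : ℝ => r * t) volume α β := by
    intro r; exact (continuous_const.mul continuous_id).intervalIntegrable _ _
  have h2 : IntervalIntegrable (fun t : ℝ => C * t^2) volume α β :=
    (continuous_const.mul (continuous_pow 2)).intervalIntegrable _ _
  rw [intervalIntegral.integral_add ((intervalIntegrable_const).add (h1 B)) h2,
    intervalIntegral.integral_add intervalIntegrable_const (h1 B),
    intervalIntegral.integral_const, intervalIntegral.integral_const_mul,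
    intervalIntegral.integral_const_mul, integral_id, integral_pow]
  push_cast [smul_eq_mul]; ring

lemma elem_int (h : ℝ) (hh : 0 < h) (k a b : ℝ) :
    ∫ x in (k*h)..((k+1)*h), (a*((k+1) - x/h) + b*(x/h - k))^2 = h*(a^2+a*b+b^2)/3 := by
  have h0 : h ≠ 0 := ne_of_gt hh
  have := intervalIntegral.integral_comp_div (a := k*h) (b := (k+1)*h) (c := h)
    (f := fun t => (a*((k+1) - t) + b*(t - k))^2) h0
  rw [this]
  have e1 : k*h/h = k := by field_simp
  have e2 : (k+1)*h/h = (k+1) := by field_simp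
  rw [e1, e2]
  have e3 : (fun t : ℝ => (a*((k+1) - t) + b*(t - k))^2) =
      fun t : ℝ => ((a*(k+1) - b*k)^2 + (2*(a*(k+1)-b*k)*(b-a))*t + (b-a)^2*t^2) := by
    funext t; ring
  rw [e3, quad_int]
  simp only [smul_eq_mul]
  ring

section OneD
variable {n : ℕ} {h : ℝ} {φ : Fin n → ℝ → ℝ}

lemma phi_cont (hφ : ∀ (i : Fin n) (x : ℝ), φ i x = max 0 (1 - |x / h - ((i.val : ℝ) + 1)|))
    (i : Fin n) : Continuous (φ i) := by
  have : φ i = fun x => max 0 (1 - |x / h - ((i.val : ℝ) + 1)|) := funext (hφ i)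
  rw [this]; fun_prop

/-- extended coefficients -/
def hatext (c : Fin n → ℝ) : ℕ → ℝ := fun m =>
  if hm : 1 ≤ m ∧ m ≤ n then c ⟨m - 1, by omega⟩ else 0

lemma u_on_elem (hh : 0 < h)
    (hφ : ∀ (i : Fin n) (x : ℝ), φ i x = max 0 (1 - |x / h - ((i.val : ℝ) + 1)|))
    (c : Fin n → ℝ) (k : ℕ) (hk : k ≤ n) (x : ℝ)
    (hx : x ∈ Set.Icc ((k:ℝ)*h) (((k:ℝ)+1)*h)) :
    ∑ i, c i * φ i x = hatext c k * (((k:ℝ)+1) - x/h) + hatext c (k+1) * (x/h - (k:ℝ)) := by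
  obtain ⟨hx1, hx2⟩ := hx
  have hs1 : (k:ℝ) ≤ x/h := (le_div_iff₀ hh).2 (by linarith)
  have hs2 : x/h ≤ (k:ℝ)+1 := (div_le_iff₀ hh).2 (by linarith)
  have key : ∀ i : Fin n, c i * φ i x =
      (if (i:ℕ)+1 = k then c i * (((k:ℝ)+1) - x/h) else 0) +
      (if (i:ℕ) = k then c i * (x/h - (k:ℝ)) else 0) := by
    intro i
    rcases eq_or_ne ((i:ℕ)+1) k with h1 | h1
    · have hik : ((i.val:ℝ)+1) = (k:ℝ) := by exact_mod_cast congrArg (Nat.cast (R := ℝ)) h1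
      have h2 : (i:ℕ) ≠ k := by omega
      rw [if_pos h1, if_neg h2, hφ, hik]
      have : |x/h - (k:ℝ)| = x/h - (k:ℝ) := abs_of_nonneg (by linarith)
      rw [this, max_eq_right (by linarith)]
      ring
    · rcases eq_or_ne ((i:ℕ)) k with h2 | h2
      · have hik : ((i.val:ℝ)) = (k:ℝ) := by exact_mod_cast congrArg (Nat.cast (R := ℝ)) h2
        rw [if_neg h1, if_pos h2, hφ, hik]
        have : |x/h - ((k:ℝ)+1)| = ((k:ℝ)+1) - x/h := by
          rw [abs_of_nonpos (by linarith)]; ring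
        rw [this, max_eq_right (by linarith)]
        ring
      · rw [if_neg h1, if_neg h2]
        have : φ i x = 0 := by
          rw [hφ, max_eq_left]
          rcases lt_or_gt_of_ne h1 with hlt | hgt
          · -- i+1 < k, so x/h - (i+1) ≥ k - (i+1) ≥ 1
            have : ((i.val:ℝ)+1) + 1 ≤ (k:ℝ) := by exact_mod_cast Nat.succ_le_of_lt hlt
            have habs : 1 ≤ |x/h - ((i.val:ℝ)+1)| := by
              rw [abs_of_nonneg (by linarith)]; linarith
            linarith
          · -- i+1 > k, and i ≠ k, so i ≥ k+1, i+1 ≥ k+2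
            have hik : k + 2 ≤ (i:ℕ) + 1 := by omega
            have : (k:ℝ) + 2 ≤ (i.val:ℝ) + 1 := by exact_mod_cast hik
            have habs : 1 ≤ |x/h - ((i.val:ℝ)+1)| := by
              rw [abs_of_nonpos (by linarith)]; linarith
            linarith
        rw [this]; ring
  rw [Finset.sum_congr rfl (fun i _ => key i), Finset.sum_add_distrib]
  congr 1
  · -- first sum = hatext c k * (...)
    rcases Nat.eq_zero_or_pos k with hk0 | hk1
    · subst hk0
      rw [Finset.sum_eq_zero (fun i _ => by simp)]
      simp [hatext]
    · have hkn : k - 1 < n := by omega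
      have : ∀ i : Fin n, (if (i:ℕ)+1 = k then c i * (((k:ℝ)+1) - x/h) else 0) =
          (if i = (⟨k-1, hkn⟩ : Fin n) then c i * (((k:ℝ)+1) - x/h) else 0) := by
        intro i
        refine if_congr ?_ rfl rfl
        constructor
        · intro hi; exact Fin.ext (by show (i:ℕ) = k - 1; omega)
        · intro hi; subst hi; show k - 1 + 1 = k; omega
      rw [Finset.sum_congr rfl (fun i _ => this i), Finset.sum_ite_eq' Finset.univ]
      simp only [Finset.mem_univ, if_pos]
      rw [hatext, dif_pos ⟨hk1, hk⟩]
  · rcases eq_or_lt_of_le hk with hkn | hkn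
    · subst hkn
      rw [Finset.sum_eq_zero (fun i _ => by rw [if_neg (by omega)])]
      rw [hatext, dif_neg (by omega)]; ring
    · have : ∀ i : Fin n, (if (i:ℕ) = k then c i * (x/h - (k:ℝ)) else 0) =
          (if i = (⟨k, hkn⟩ : Fin n) then c i * (x/h - (k:ℝ)) else 0) := by
        intro i
        refine if_congr ?_ rfl rfl
        exact ⟨fun hi => Fin.ext (by show (i:ℕ) = k; omega), fun hi => by subst hi; rfl⟩
      rw [Finset.sum_congr rfl (fun i _ => this i), Finset.sum_ite_eq' Finset.univ]
      simp only [Finset.mem_univ, if_pos]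
      rw [hatext, dif_pos ⟨by omega, by omega⟩]
      congr 1

end OneD

section OneDMain
variable {n : ℕ} {h : ℝ} {φ : Fin n → ℝ → ℝ}

lemma u_cont (hφ : ∀ (i : Fin n) (x : ℝ), φ i x = max 0 (1 - |x / h - ((i.val : ℝ) + 1)|))
    (c : Fin n → ℝ) : Continuous (fun x => ∑ i, c i * φ i x) :=
  continuous_finset_sum _ fun i _ => continuous_const.mul (phi_cont hφ i)

lemma oneD_bounds (hh : h = 1/((n:ℝ)+1))
    (hφ : ∀ (i : Fin n) (x : ℝ), φ i x = max 0 (1 - |x / h - ((i.val : ℝ) + 1)|))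
    (c : Fin n → ℝ) :
    h/3 * (∑ i, c i ^ 2) ≤ (∫ x in Set.Icc (0:ℝ) 1, (∑ i, c i * φ i x)^2) ∧
      (∫ x in Set.Icc (0:ℝ) 1, (∑ i, c i * φ i x)^2) ≤ h * (∑ i, c i ^ 2) := by
  have hpos : 0 < h := by rw [hh]; positivity
  have hu : Continuous (fun x => (∑ i, c i * φ i x)^2) := (u_cont hφ c).pow 2
  set a : ℕ → ℝ := hatext c with ha
  -- decompose the integral
  have hIcc : (∫ x in Set.Icc (0:ℝ) 1, (∑ i, c i * φ i x)^2)
      = ∫ x in (0:ℝ)..1, (∑ i, c i * φ i x)^2 := by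
    rw [intervalIntegral.integral_of_le zero_le_one, integral_Icc_eq_integral_Ioc]
  have hadj : ∑ k ∈ Finset.range (n+1),
        ∫ x in (((k:ℕ):ℝ)*h)..((((k+1:ℕ)):ℝ)*h), (∑ i, c i * φ i x)^2
      = ∫ x in (((0:ℕ):ℝ)*h)..((((n+1:ℕ)):ℝ)*h), (∑ i, c i * φ i x)^2 :=
    intervalIntegral.sum_integral_adjacent_intervals
      (a := fun k : ℕ => ((k:ℕ):ℝ)*h) (fun k _ => hu.intervalIntegrable _ _)
  have hend : (((n+1:ℕ)):ℝ)*h = 1 := by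
    rw [hh]; push_cast; field_simp
  have hstart : (((0:ℕ):ℝ)*h) = 0 := by norm_num
  have helem : ∀ k ∈ Finset.range (n+1),
      (∫ x in (((k:ℕ):ℝ)*h)..((((k+1:ℕ)):ℝ)*h), (∑ i, c i * φ i x)^2)
        = h*(a k^2 + a k * a (k+1) + a (k+1)^2)/3 := by
    intro k hk
    have hk' : k ≤ n := by simpa [Nat.lt_succ_iff] using Finset.mem_range.1 hk
    have hcast : (((k+1:ℕ)):ℝ) = (k:ℝ)+1 := by push_cast; ring
    rw [hcast]
    rw [intervalIntegral.integral_congr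
      (g := fun x => (a k * (((k:ℝ)+1) - x/h) + a (k+1)*(x/h - (k:ℝ)))^2) ?_]
    · exact elem_int h hpos (k:ℝ) (a k) (a (k+1))
    · intro x hx
      rw [Set.uIcc_of_le (by nlinarith)] at hx
      show (∑ i, c i * φ i x)^2 = (a k * (((k:ℝ)+1) - x/h) + a (k+1)*(x/h - (k:ℝ)))^2
      rw [u_on_elem hpos hφ c k hk' x hx]
  have hdecomp : (∫ x in Set.Icc (0:ℝ) 1, (∑ i, c i * φ i x)^2)
      = ∑ k ∈ Finset.range (n+1), h*(a k^2 + a k * a (k+1) + a (k+1)^2)/3 := by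
    rw [hIcc, ← hstart, ← hend, ← hadj]
    exact Finset.sum_congr rfl helem
  -- coefficient sums
  have hshift : ∑ k ∈ Finset.range n, (a (k+1))^2 = ∑ i, c i ^ 2 := by
    rw [← Fin.sum_univ_eq_sum_range (fun k => (a (k+1))^2) n]
    refine Finset.sum_congr rfl fun i _ => ?_
    have : a ((i:ℕ)+1) = c i := by
      rw [ha, hatext, dif_pos ⟨by omega, by omega⟩]
      exact congrArg c (Fin.ext rfl)
    rw [this]
  have S2 : ∑ k ∈ Finset.range (n+1), (a (k+1))^2 = ∑ i, c i ^ 2 := by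
    rw [Finset.sum_range_succ]
    have : a (n+1) = 0 := by rw [ha, hatext, dif_neg (by omega)]
    rw [this, hshift]; ring
  have S1 : ∑ k ∈ Finset.range (n+1), (a k)^2 = ∑ i, c i ^ 2 := by
    rw [Finset.sum_range_succ']
    have : a 0 = 0 := by rw [ha, hatext, dif_neg (by omega)]
    rw [this, hshift]; ring
  have hsum2 : ∑ k ∈ Finset.range (n+1), ((a k)^2 + (a (k+1))^2) = 2 * ∑ i, c i ^ 2 := by
    rw [Finset.sum_add_distrib, S1, S2]; ring
  constructor
  · rw [hdecomp]
    calc h/3 * (∑ i, c i ^ 2)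
        = ∑ k ∈ Finset.range (n+1), h/6 * ((a k)^2 + (a (k+1))^2) := by
          rw [← Finset.mul_sum, hsum2]; ring
      _ ≤ ∑ k ∈ Finset.range (n+1), h*(a k^2 + a k * a (k+1) + a (k+1)^2)/3 := by
          refine Finset.sum_le_sum fun k _ => ?_
          nlinarith [mul_nonneg hpos.le (sq_nonneg (a k + a (k+1)))]
  · rw [hdecomp]
    calc ∑ k ∈ Finset.range (n+1), h*(a k^2 + a k * a (k+1) + a (k+1)^2)/3
        ≤ ∑ k ∈ Finset.range (n+1), h/2 * ((a k)^2 + (a (k+1))^2) := by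
          refine Finset.sum_le_sum fun k _ => ?_
          nlinarith [mul_nonneg hpos.le (sq_nonneg (a k - a (k+1)))]
      _ = h * (∑ i, c i ^ 2) := by rw [← Finset.mul_sum, hsum2]; ring

lemma oneD_expand
    (hφ : ∀ (i : Fin n) (x : ℝ), φ i x = max 0 (1 - |x / h - ((i.val : ℝ) + 1)|))
    (c d : Fin n → ℝ) :
    ∫ x in Set.Icc (0:ℝ) 1, (∑ i, c i * φ i x) * (∑ j, d j * φ j x) =
      ∑ i, ∑ j, c i * d j * ∫ x in Set.Icc (0:ℝ) 1, φ i x * φ j x := by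
  have hpt : ∀ x : ℝ, (∑ i, c i * φ i x) * (∑ j, d j * φ j x)
      = ∑ i, ∑ j, c i * d j * (φ i x * φ j x) := by
    intro x
    rw [Finset.sum_mul_sum]
    exact Finset.sum_congr rfl fun i _ => Finset.sum_congr rfl fun j _ => by ring
  simp_rw [hpt]
  rw [integral_finset_sum]
  · refine Finset.sum_congr rfl fun i _ => ?_
    rw [integral_finset_sum]
    · refine Finset.sum_congr rfl fun j _ => ?_
      exact integral_const_mul _ _
    · intro j _
      exact (continuous_const.mul ((phi_cont hφ i).mul (phi_cont hφ j))).integrableOn_Icc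
  · intro i _
    exact (continuous_finset_sum _ fun j _ =>
      continuous_const.mul ((phi_cont hφ i).mul (phi_cont hφ j))).integrableOn_Icc

end OneDMain

section TwoD
variable {n : ℕ} {h : ℝ} {φ : Fin n → ℝ → ℝ}

/-- 1D quadratic form -/
noncomputable def QQ (φ : Fin n → ℝ → ℝ) (c : Fin n → ℝ) : ℝ :=
  ∑ k, ∑ k', c k * c k' * ∫ x in Set.Icc (0:ℝ) 1, φ k x * φ k' x

lemma QQ_eq (hφ : ∀ (i : Fin n) (x : ℝ), φ i x = max 0 (1 - |x / h - ((i.val : ℝ) + 1)|))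
    (c : Fin n → ℝ) :
    QQ φ c = ∫ x in Set.Icc (0:ℝ) 1, (∑ i, c i * φ i x)^2 := by
  have : (fun x => (∑ i, c i * φ i x)^2) = fun x => (∑ i, c i * φ i x) * (∑ j, c j * φ j x) := by
    funext x; ring
  rw [this, oneD_expand hφ c c, QQ]

lemma QQ_bounds (hh : h = 1/((n:ℝ)+1))
    (hφ : ∀ (i : Fin n) (x : ℝ), φ i x = max 0 (1 - |x / h - ((i.val : ℝ) + 1)|))
    (c : Fin n → ℝ) :
    h/3 * (∑ i, c i ^ 2) ≤ QQ φ c ∧ QQ φ c ≤ h * (∑ i, c i ^ 2) := by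
  rw [QQ_eq hφ c]; exact oneD_bounds hh hφ c

lemma sum_prod_reindex (w : Fin n × Fin n → ℝ) (x y : ℝ) :
    ∑ p : Fin n × Fin n, w p * (φ p.1 x * φ p.2 y)
      = ∑ k, (∑ j, w (j,k) * φ j x) * φ k y := by
  rw [Fintype.sum_prod_type, Finset.sum_comm]
  refine Finset.sum_congr rfl fun k _ => ?_
  rw [Finset.sum_mul]
  exact Finset.sum_congr rfl fun j _ => by ring

lemma twoD_inner (hφ : ∀ (i : Fin n) (x : ℝ), φ i x = max 0 (1 - |x / h - ((i.val : ℝ) + 1)|))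
    (w : Fin n × Fin n → ℝ) (x : ℝ) :
    ∫ y in Set.Icc (0:ℝ) 1, (∑ p : Fin n × Fin n, w p * (φ p.1 x * φ p.2 y))^2
      = QQ φ (fun k => ∑ j, w (j,k) * φ j x) := by
  have h1 : (fun y => (∑ p : Fin n × Fin n, w p * (φ p.1 x * φ p.2 y))^2)
      = fun y => (∑ k, (∑ j, w (j,k) * φ j x) * φ k y)^2 := by
    funext y; rw [sum_prod_reindex]
  rw [h1, ← QQ_eq hφ]

/-- 2D quadratic form (nested) -/
noncomputable def QQ2 (φ : Fin n → ℝ → ℝ) (w : Fin n × Fin n → ℝ) : ℝ :=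
  ∑ k, ∑ k', (∑ j, ∑ j', w (j,k) * w (j',k') * ∫ x in Set.Icc (0:ℝ) 1, φ j x * φ j' x)
    * ∫ x in Set.Icc (0:ℝ) 1, φ k x * φ k' x

lemma wcont (hφ : ∀ (i : Fin n) (x : ℝ), φ i x = max 0 (1 - |x / h - ((i.val : ℝ) + 1)|))
    (w : Fin n × Fin n → ℝ) (k : Fin n) :
    Continuous (fun x => ∑ j, w (j,k) * φ j x) :=
  continuous_finset_sum _ fun j _ => continuous_const.mul (phi_cont hφ j)

lemma twoD_expand (hφ : ∀ (i : Fin n) (x : ℝ), φ i x = max 0 (1 - |x / h - ((i.val : ℝ) + 1)|))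
    (w : Fin n × Fin n → ℝ) :
    ∫ x in Set.Icc (0:ℝ) 1,
        (∫ y in Set.Icc (0:ℝ) 1, (∑ p : Fin n × Fin n, w p * (φ p.1 x * φ p.2 y))^2)
      = QQ2 φ w := by
  have h1 : (fun x => ∫ y in Set.Icc (0:ℝ) 1,
      (∑ p : Fin n × Fin n, w p * (φ p.1 x * φ p.2 y))^2)
      = fun x => ∑ k, ∑ k', (∑ j, w (j,k) * φ j x) * (∑ j', w (j',k') * φ j' x)
          * ∫ t in Set.Icc (0:ℝ) 1, φ k t * φ k' t := by
    funext x; rw [twoD_inner hφ w x, QQ]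
  rw [h1, integral_finset_sum]
  · refine Finset.sum_congr rfl fun k _ => ?_
    rw [integral_finset_sum]
    · refine Finset.sum_congr rfl fun k' _ => ?_
      rw [integral_mul_const, oneD_expand hφ (fun j => w (j,k)) (fun j' => w (j',k'))]
    · intro k' _
      exact (((wcont hφ w k).mul (wcont hφ w k')).mul continuous_const).integrableOn_Icc
  · intro k _
    exact (continuous_finset_sum _ fun k' _ =>
      ((wcont hφ w k).mul (wcont hφ w k')).mul continuous_const).integrableOn_Icc

lemma twoD_bounds (hh : h = 1/((n:ℝ)+1))
    (hφ : ∀ (i : Fin n) (x : ℝ), φ i x = max 0 (1 - |x / h - ((i.val : ℝ) + 1)|))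
    (w : Fin n × Fin n → ℝ) :
    h^2/9 * (∑ p : Fin n × Fin n, w p ^ 2) ≤ QQ2 φ w ∧
      QQ2 φ w ≤ h^2 * (∑ p : Fin n × Fin n, w p ^ 2) := by
  have hpos : 0 < h := by rw [hh]; positivity
  have hE : QQ2 φ w = ∫ x in Set.Icc (0:ℝ) 1, QQ φ (fun k => ∑ j, w (j,k) * φ j x) := by
    rw [← twoD_expand hφ w]
    refine setIntegral_congr_fun measurableSet_Icc fun x _ => ?_
    rw [twoD_inner hφ w x]
  have hQc : Continuous (fun x => QQ φ (fun k => ∑ j, w (j,k) * φ j x)) := by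
    unfold QQ
    exact continuous_finset_sum _ fun k _ => continuous_finset_sum _ fun k' _ =>
      ((wcont hφ w k).mul (wcont hφ w k')).mul continuous_const
  have hSc : Continuous (fun x => ∑ k, (∑ j, w (j,k) * φ j x)^2) :=
    continuous_finset_sum _ fun k _ => (wcont hφ w k).pow 2
  have hsum_eq : ∑ k, ∫ x in Set.Icc (0:ℝ) 1, (∑ j, w (j,k) * φ j x)^2
      = ∫ x in Set.Icc (0:ℝ) 1, ∑ k, (∑ j, w (j,k) * φ j x)^2 := by
    rw [integral_finset_sum]
    intro k _
    exact ((wcont hφ w k).pow 2).integrableOn_Icc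
  have hprod : ∑ p : Fin n × Fin n, w p ^ 2 = ∑ k, ∑ j, w (j,k)^2 := by
    rw [Fintype.sum_prod_type_right]
  constructor
  · rw [hE]
    have step1 : ∀ k : Fin n, h/3 * (∑ j, w (j,k)^2)
        ≤ ∫ x in Set.Icc (0:ℝ) 1, (∑ j, w (j,k) * φ j x)^2 :=
      fun k => (oneD_bounds hh hφ (fun j => w (j,k))).1
    have step2 : ∫ x in Set.Icc (0:ℝ) 1, (h/3) * ∑ k, (∑ j, w (j,k) * φ j x)^2
        ≤ ∫ x in Set.Icc (0:ℝ) 1, QQ φ (fun k => ∑ j, w (j,k) * φ j x) := by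
      refine setIntegral_mono_on ((continuous_const.mul hSc).integrableOn_Icc)
        (hQc.integrableOn_Icc) measurableSet_Icc fun x _ => ?_
      exact (QQ_bounds hh hφ _).1
    calc h^2/9 * (∑ p : Fin n × Fin n, w p ^ 2)
        = h/3 * ∑ k, (h/3 * ∑ j, w (j,k)^2) := by
          rw [← Finset.mul_sum, hprod]; ring
      _ ≤ h/3 * ∑ k, ∫ x in Set.Icc (0:ℝ) 1, (∑ j, w (j,k) * φ j x)^2 := by
          refine mul_le_mul_of_nonneg_left (Finset.sum_le_sum fun k _ => step1 k) (by positivity)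
      _ = ∫ x in Set.Icc (0:ℝ) 1, (h/3) * ∑ k, (∑ j, w (j,k) * φ j x)^2 := by
          rw [hsum_eq, integral_const_mul]
      _ ≤ _ := step2
  · rw [hE]
    have step1 : ∀ k : Fin n, (∫ x in Set.Icc (0:ℝ) 1, (∑ j, w (j,k) * φ j x)^2)
        ≤ h * (∑ j, w (j,k)^2) :=
      fun k => (oneD_bounds hh hφ (fun j => w (j,k))).2
    have step2 : ∫ x in Set.Icc (0:ℝ) 1, QQ φ (fun k => ∑ j, w (j,k) * φ j x)
        ≤ ∫ x in Set.Icc (0:ℝ) 1, h * ∑ k, (∑ j, w (j,k) * φ j x)^2 := by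
      refine setIntegral_mono_on (hQc.integrableOn_Icc)
        ((continuous_const.mul hSc).integrableOn_Icc) measurableSet_Icc fun x _ => ?_
      exact (QQ_bounds hh hφ _).2
    calc ∫ x in Set.Icc (0:ℝ) 1, QQ φ (fun k => ∑ j, w (j,k) * φ j x)
        ≤ ∫ x in Set.Icc (0:ℝ) 1, h * ∑ k, (∑ j, w (j,k) * φ j x)^2 := step2
      _ = h * ∑ k, ∫ x in Set.Icc (0:ℝ) 1, (∑ j, w (j,k) * φ j x)^2 := by
          rw [hsum_eq, integral_const_mul]
      _ ≤ h * ∑ k, h * (∑ j, w (j,k)^2) := by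
          refine mul_le_mul_of_nonneg_left (Finset.sum_le_sum fun k _ => step1 k) hpos.le
      _ = h^2 * (∑ p : Fin n × Fin n, w p ^ 2) := by
          rw [← Finset.mul_sum, hprod]; ring

end TwoD

section ThreeD
variable {n : ℕ} {h : ℝ} {φ : Fin n → ℝ → ℝ}

lemma sum_prod_reindex3 (v : Fin n × Fin n × Fin n → ℝ) (x y z : ℝ) :
    ∑ a : Fin n × Fin n × Fin n, v a * (φ a.1 x * φ a.2.1 y * φ a.2.2 z)
      = ∑ p : Fin n × Fin n, (∑ i, v (i, p) * φ i x) * (φ p.1 y * φ p.2 z) := by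
  rw [Fintype.sum_prod_type, Finset.sum_comm]
  refine Finset.sum_congr rfl fun p _ => ?_
  rw [Finset.sum_mul]
  exact Finset.sum_congr rfl fun i _ => by ring

lemma threeD_inner
    (hφ : ∀ (i : Fin n) (x : ℝ), φ i x = max 0 (1 - |x / h - ((i.val : ℝ) + 1)|))
    (v : Fin n × Fin n × Fin n → ℝ) (x : ℝ) :
    (∫ y in Set.Icc (0:ℝ) 1, ∫ z in Set.Icc (0:ℝ) 1,
        (∑ a : Fin n × Fin n × Fin n, v a * (φ a.1 x * φ a.2.1 y * φ a.2.2 z))^2)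
      = QQ2 φ (fun p => ∑ i, v (i, p) * φ i x) := by
  have h2 : (fun y => ∫ z in Set.Icc (0:ℝ) 1,
      (∑ a : Fin n × Fin n × Fin n, v a * (φ a.1 x * φ a.2.1 y * φ a.2.2 z))^2)
      = fun y => ∫ z in Set.Icc (0:ℝ) 1,
        (∑ p : Fin n × Fin n, (∑ i, v (i, p) * φ i x) * (φ p.1 y * φ p.2 z))^2 := by
    funext y; congr 1; funext z; rw [sum_prod_reindex3]
  rw [h2]
  exact twoD_expand hφ _

lemma QQ2_cont
    (hφ : ∀ (i : Fin n) (x : ℝ), φ i x = max 0 (1 - |x / h - ((i.val : ℝ) + 1)|))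
    (v : Fin n × Fin n × Fin n → ℝ) :
    Continuous (fun x => QQ2 φ (fun p => ∑ i, v (i, p) * φ i x)) := by
  have hc : ∀ p : Fin n × Fin n, Continuous fun x => ∑ i, v (i,p) * φ i x :=
    fun p => continuous_finset_sum _ fun i _ => continuous_const.mul (phi_cont hφ i)
  unfold QQ2
  exact continuous_finset_sum _ fun k _ => continuous_finset_sum _ fun k' _ =>
    (continuous_finset_sum _ fun j _ => continuous_finset_sum _ fun j' _ =>
      ((hc (j,k)).mul (hc (j',k'))).mul continuous_const).mul continuous_const

lemma threeD_bounds (hh : h = 1/((n:ℝ)+1))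
    (hφ : ∀ (i : Fin n) (x : ℝ), φ i x = max 0 (1 - |x / h - ((i.val : ℝ) + 1)|))
    (v : Fin n × Fin n × Fin n → ℝ) :
    h^3/27 * (∑ a : Fin n × Fin n × Fin n, v a ^ 2)
        ≤ (∫ x in Set.Icc (0:ℝ) 1, QQ2 φ (fun p => ∑ i, v (i, p) * φ i x)) ∧
      (∫ x in Set.Icc (0:ℝ) 1, QQ2 φ (fun p => ∑ i, v (i, p) * φ i x))
        ≤ h^3 * (∑ a : Fin n × Fin n × Fin n, v a ^ 2) := by
  have hpos : 0 < h := by rw [hh]; positivity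
  have hc : ∀ p : Fin n × Fin n, Continuous fun x => ∑ i, v (i,p) * φ i x :=
    fun p => continuous_finset_sum _ fun i _ => continuous_const.mul (phi_cont hφ i)
  have hSc : Continuous (fun x => ∑ p : Fin n × Fin n, (∑ i, v (i,p) * φ i x)^2) :=
    continuous_finset_sum _ fun p _ => (hc p).pow 2
  have hsum_eq : ∑ p : Fin n × Fin n, ∫ x in Set.Icc (0:ℝ) 1, (∑ i, v (i,p) * φ i x)^2
      = ∫ x in Set.Icc (0:ℝ) 1, ∑ p : Fin n × Fin n, (∑ i, v (i,p) * φ i x)^2 := by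
    rw [integral_finset_sum]
    intro p _
    exact ((hc p).pow 2).integrableOn_Icc
  have hprod : ∑ a : Fin n × Fin n × Fin n, v a ^ 2
      = ∑ p : Fin n × Fin n, ∑ i, v (i,p)^2 := by
    rw [Fintype.sum_prod_type_right]
  constructor
  · have step2 : ∫ x in Set.Icc (0:ℝ) 1,
        (h^2/9) * ∑ p : Fin n × Fin n, (∑ i, v (i,p) * φ i x)^2
        ≤ ∫ x in Set.Icc (0:ℝ) 1, QQ2 φ (fun p => ∑ i, v (i, p) * φ i x) := by
      refine setIntegral_mono_on ((continuous_const.mul hSc).integrableOn_Icc)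
        ((QQ2_cont hφ v).integrableOn_Icc) measurableSet_Icc fun x _ => ?_
      exact (twoD_bounds hh hφ _).1
    calc h^3/27 * (∑ a : Fin n × Fin n × Fin n, v a ^ 2)
        = h^2/9 * ∑ p : Fin n × Fin n, (h/3 * ∑ i, v (i,p)^2) := by
          rw [← Finset.mul_sum, hprod]; ring
      _ ≤ h^2/9 * ∑ p : Fin n × Fin n, ∫ x in Set.Icc (0:ℝ) 1, (∑ i, v (i,p) * φ i x)^2 := by
          refine mul_le_mul_of_nonneg_left
            (Finset.sum_le_sum fun p _ => (oneD_bounds hh hφ (fun i => v (i,p))).1)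
            (by positivity)
      _ = ∫ x in Set.Icc (0:ℝ) 1,
            (h^2/9) * ∑ p : Fin n × Fin n, (∑ i, v (i,p) * φ i x)^2 := by
          rw [hsum_eq, integral_const_mul]
      _ ≤ _ := step2
  · have step2 : ∫ x in Set.Icc (0:ℝ) 1, QQ2 φ (fun p => ∑ i, v (i, p) * φ i x)
        ≤ ∫ x in Set.Icc (0:ℝ) 1,
            (h^2) * ∑ p : Fin n × Fin n, (∑ i, v (i,p) * φ i x)^2 := by
      refine setIntegral_mono_on ((QQ2_cont hφ v).integrableOn_Icc)
        ((continuous_const.mul hSc).integrableOn_Icc) measurableSet_Icc fun x _ => ?_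
      exact (twoD_bounds hh hφ _).2
    calc ∫ x in Set.Icc (0:ℝ) 1, QQ2 φ (fun p => ∑ i, v (i, p) * φ i x)
        ≤ ∫ x in Set.Icc (0:ℝ) 1,
            (h^2) * ∑ p : Fin n × Fin n, (∑ i, v (i,p) * φ i x)^2 := step2
      _ = h^2 * ∑ p : Fin n × Fin n, ∫ x in Set.Icc (0:ℝ) 1, (∑ i, v (i,p) * φ i x)^2 := by
          rw [hsum_eq, integral_const_mul]
      _ ≤ h^2 * ∑ p : Fin n × Fin n, (h * ∑ i, v (i,p)^2) := by
          refine mul_le_mul_of_nonneg_left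
            (Finset.sum_le_sum fun p _ => (oneD_bounds hh hφ (fun i => v (i,p))).2)
            (by positivity)
      _ = h^3 * (∑ a : Fin n × Fin n × Fin n, v a ^ 2) := by
          rw [← Finset.mul_sum, hprod]; ring

lemma fubini3 (f : ℝ × ℝ × ℝ → ℝ) (hf : Continuous f) :
    (∫ p in (Set.Icc (0:ℝ) 1) ×ˢ (Set.Icc (0:ℝ) 1) ×ˢ (Set.Icc (0:ℝ) 1), f p)
      = ∫ x in Set.Icc (0:ℝ) 1, ∫ y in Set.Icc (0:ℝ) 1, ∫ z in Set.Icc (0:ℝ) 1,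
          f (x, y, z) := by
  have hvol2 : (volume : Measure (ℝ×ℝ)) = (volume : Measure ℝ).prod volume := rfl
  have hvol3 : (volume : Measure (ℝ×ℝ×ℝ)) = (volume : Measure ℝ).prod (volume : Measure (ℝ×ℝ)) := rfl
  have hinner : ∀ g : ℝ × ℝ → ℝ, Continuous g →
      (∫ q in (Set.Icc (0:ℝ) 1) ×ˢ (Set.Icc (0:ℝ) 1), g q)
        = ∫ y in Set.Icc (0:ℝ) 1, ∫ z in Set.Icc (0:ℝ) 1, g (y, z) := by
    intro g hg
    have hint : Integrable g
        (((volume : Measure ℝ).restrict (Set.Icc 0 1)).prod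
          ((volume : Measure ℝ).restrict (Set.Icc 0 1))) := by
      rw [Measure.prod_restrict, ← hvol2]
      exact hg.continuousOn.integrableOn_compact (isCompact_Icc.prod isCompact_Icc)
    rw [hvol2, ← Measure.prod_restrict]
    exact integral_prod g hint
  have hint3 : Integrable f
      (((volume : Measure ℝ).restrict (Set.Icc 0 1)).prod
        ((volume : Measure (ℝ×ℝ)).restrict ((Set.Icc (0:ℝ) 1) ×ˢ (Set.Icc (0:ℝ) 1)))) := by
    rw [Measure.prod_restrict, ← hvol3]
    exact hf.continuousOn.integrableOn_compact
      (isCompact_Icc.prod (isCompact_Icc.prod isCompact_Icc))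
  rw [hvol3, ← Measure.prod_restrict]
  rw [integral_prod f hint3]
  refine integral_congr_ae (Filter.Eventually.of_forall fun x => ?_)
  exact hinner (fun q => f (x, q)) (hf.comp (Continuous.prodMk_right x))

end ThreeD


/-- **Absorption matrix `A`.** With `n ≥ 1`, `h = 1/(n+1)`, 3D hat functions
`φ_{ijk}(x,y,z) = φ_i(x)φ_j(y)φ_k(z)`, and a measurable coefficient `Σ_a` with
`0 < Σ_min ≤ Σ_a ≤ Σ_max` on `[0,1]³`, the matrix
`A_{(i,j,k),(i',j',k')} = ∫_{[0,1]³} Σ_a φ_{ijk} φ_{i'j'k'}` is symmetric positive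
definite, every eigenvalue `λ` of `A` satisfies `Σ_min·h³/27 ≤ λ ≤ Σ_max·h³`, and hence
the condition number of `A` is at most `27·Σ_max/Σ_min`, independent of `n`. -/
theorem stmt5 (n : ℕ) (hn : 1 ≤ n) (h : ℝ) (hh : h = 1 / ((n : ℝ) + 1))
    (φ : Fin n → ℝ → ℝ)
    (hφ : ∀ (i : Fin n) (x : ℝ), φ i x = max 0 (1 - |x / h - ((i.val : ℝ) + 1)|))
    (Sa : ℝ × ℝ × ℝ → ℝ) (Smin Smax : ℝ) (hSmin : 0 < Smin)
    (hSameas : Measurable Sa)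
    (hSa : ∀ p ∈ (Set.Icc (0:ℝ) 1) ×ˢ (Set.Icc (0:ℝ) 1) ×ˢ (Set.Icc (0:ℝ) 1),
      Smin ≤ Sa p ∧ Sa p ≤ Smax)
    (A : Matrix (Fin n × Fin n × Fin n) (Fin n × Fin n × Fin n) ℝ)
    (hA : ∀ i j k i' j' k', A (i, j, k) (i', j', k') =
      ∫ p in (Set.Icc (0:ℝ) 1) ×ˢ (Set.Icc (0:ℝ) 1) ×ˢ (Set.Icc (0:ℝ) 1),
        Sa p * ((φ i p.1 * φ j p.2.1 * φ k p.2.2) * (φ i' p.1 * φ j' p.2.1 * φ k' p.2.2))) :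
    A.IsSymm ∧ A.PosDef ∧
    (∀ (lam : ℝ) (v : Fin n × Fin n × Fin n → ℝ), v ≠ 0 → A.mulVec v = lam • v →
      Smin * h ^ 3 / 27 ≤ lam ∧ lam ≤ Smax * h ^ 3) ∧
    (∀ (lam mu : ℝ) (v w : Fin n × Fin n × Fin n → ℝ), v ≠ 0 → w ≠ 0 →
      A.mulVec v = lam • v → A.mulVec w = mu • w → lam ≤ 27 * (Smax / Smin) * mu) := by
  have hpos : 0 < h := by rw [hh]; positivity
  have hcube_meas : MeasurableSet ((Set.Icc (0:ℝ) 1) ×ˢ (Set.Icc (0:ℝ) 1) ×ˢ (Set.Icc (0:ℝ) 1)) :=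
    measurableSet_Icc.prod (measurableSet_Icc.prod measurableSet_Icc)
  have hcube_cpt : IsCompact ((Set.Icc (0:ℝ) 1) ×ˢ (Set.Icc (0:ℝ) 1) ×ˢ (Set.Icc (0:ℝ) 1)) :=
    isCompact_Icc.prod (isCompact_Icc.prod isCompact_Icc)
  have hzero_mem : ((0:ℝ), (0:ℝ), (0:ℝ)) ∈
      (Set.Icc (0:ℝ) 1) ×ˢ (Set.Icc (0:ℝ) 1) ×ˢ (Set.Icc (0:ℝ) 1) := by
    refine ⟨?_, ?_, ?_⟩ <;> constructor <;> norm_num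
  have hSmax : Smin ≤ Smax := by
    have := hSa _ hzero_mem; linarith [this.1, this.2]
  have hSmaxpos : 0 < Smax := lt_of_lt_of_le hSmin hSmax
  have hΦc : ∀ a : Fin n × Fin n × Fin n,
      Continuous (fun p : ℝ×ℝ×ℝ => φ a.1 p.1 * φ a.2.1 p.2.1 * φ a.2.2 p.2.2) := fun a =>
    (((phi_cont hφ a.1).comp continuous_fst).mul
      ((phi_cont hφ a.2.1).comp (continuous_fst.comp continuous_snd))).mul
      ((phi_cont hφ a.2.2).comp (continuous_snd.comp continuous_snd))
  have hIntSa : ∀ g : ℝ×ℝ×ℝ → ℝ, Continuous g →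
      IntegrableOn (fun p => Sa p * g p)
        ((Set.Icc (0:ℝ) 1) ×ˢ (Set.Icc (0:ℝ) 1) ×ˢ (Set.Icc (0:ℝ) 1)) := by
    intro g hg
    obtain ⟨C, hC⟩ := hcube_cpt.exists_bound_of_continuousOn hg.continuousOn
    refine Measure.integrableOn_of_bounded (M := Smax * C) hcube_cpt.measure_lt_top.ne
      ((hSameas.mul hg.measurable).aestronglyMeasurable) ?_
    rw [ae_restrict_iff' hcube_meas]
    refine Filter.Eventually.of_forall fun p hp => ?_
    have h1 := hSa p hp
    have h2 := hC p hp
    rw [norm_mul, Real.norm_eq_abs (Sa p)]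
    have habs : |Sa p| ≤ Smax := by
      rw [abs_of_pos (lt_of_lt_of_le hSmin h1.1)]; exact h1.2
    exact mul_le_mul habs h2 (norm_nonneg _) hSmaxpos.le
  -- the quadratic form bounds
  have key : ∀ v : Fin n × Fin n × Fin n → ℝ,
      Smin * (h^3/27 * ∑ a : Fin n × Fin n × Fin n, v a ^ 2)
          ≤ dotProduct v (A.mulVec v) ∧
        dotProduct v (A.mulVec v)
          ≤ Smax * (h^3 * ∑ a : Fin n × Fin n × Fin n, v a ^ 2) := by
    intro v
    have hucont : Continuous (fun p : ℝ×ℝ×ℝ =>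
        ∑ a : Fin n × Fin n × Fin n, v a * (φ a.1 p.1 * φ a.2.1 p.2.1 * φ a.2.2 p.2.2)) :=
      continuous_finset_sum _ fun a _ => continuous_const.mul (hΦc a)
    have hJ : (∫ p in (Set.Icc (0:ℝ) 1) ×ˢ (Set.Icc (0:ℝ) 1) ×ˢ (Set.Icc (0:ℝ) 1),
          (∑ a : Fin n × Fin n × Fin n, v a * (φ a.1 p.1 * φ a.2.1 p.2.1 * φ a.2.2 p.2.2))^2)
        = ∫ x in Set.Icc (0:ℝ) 1, QQ2 φ (fun p => ∑ i, v (i, p) * φ i x) := by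
      rw [fubini3 (fun p : ℝ×ℝ×ℝ => (∑ a : Fin n × Fin n × Fin n, v a * (φ a.1 p.1 * φ a.2.1 p.2.1 * φ a.2.2 p.2.2))^2) (hucont.pow 2)]
      refine integral_congr_ae (Filter.Eventually.of_forall fun x => ?_)
      exact threeD_inner hφ v x
    have hJlb := (threeD_bounds hh hφ v).1
    have hJub := (threeD_bounds hh hφ v).2
    rw [← hJ] at hJlb hJub
    have hterm : ∀ a b : Fin n × Fin n × Fin n,
        v a * (A a b * v b) = ∫ p in (Set.Icc (0:ℝ) 1) ×ˢ (Set.Icc (0:ℝ) 1) ×ˢ (Set.Icc (0:ℝ) 1),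
          Sa p * ((v a * (φ a.1 p.1 * φ a.2.1 p.2.1 * φ a.2.2 p.2.2)) *
            (v b * (φ b.1 p.1 * φ b.2.1 p.2.1 * φ b.2.2 p.2.2))) := by
      intro a b
      have hab : A a b = ∫ p in (Set.Icc (0:ℝ) 1) ×ˢ (Set.Icc (0:ℝ) 1) ×ˢ (Set.Icc (0:ℝ) 1),
          Sa p * ((φ a.1 p.1 * φ a.2.1 p.2.1 * φ a.2.2 p.2.2) *
            (φ b.1 p.1 * φ b.2.1 p.2.1 * φ b.2.2 p.2.2)) := by
        obtain ⟨i, j, k⟩ := a; obtain ⟨i', j', k'⟩ := b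
        exact hA i j k i' j' k'
      calc v a * (A a b * v b) = (v a * v b) * A a b := by ring
        _ = ∫ p in (Set.Icc (0:ℝ) 1) ×ˢ (Set.Icc (0:ℝ) 1) ×ˢ (Set.Icc (0:ℝ) 1),
            (v a * v b) * (Sa p * ((φ a.1 p.1 * φ a.2.1 p.2.1 * φ a.2.2 p.2.2) *
              (φ b.1 p.1 * φ b.2.1 p.2.1 * φ b.2.2 p.2.2))) := by
            rw [hab, ← integral_const_mul]
        _ = _ := integral_congr_ae (Filter.Eventually.of_forall fun p => by ring)
    have hint1 : ∀ a b : Fin n × Fin n × Fin n,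
        IntegrableOn (fun p : ℝ×ℝ×ℝ => Sa p *
          ((v a * (φ a.1 p.1 * φ a.2.1 p.2.1 * φ a.2.2 p.2.2)) *
            (v b * (φ b.1 p.1 * φ b.2.1 p.2.1 * φ b.2.2 p.2.2))))
          ((Set.Icc (0:ℝ) 1) ×ˢ (Set.Icc (0:ℝ) 1) ×ˢ (Set.Icc (0:ℝ) 1)) := fun a b =>
      hIntSa _ ((continuous_const.mul (hΦc a)).mul (continuous_const.mul (hΦc b)))
    have hP : dotProduct v (A.mulVec v)
        = ∫ p in (Set.Icc (0:ℝ) 1) ×ˢ (Set.Icc (0:ℝ) 1) ×ˢ (Set.Icc (0:ℝ) 1),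
            Sa p * (∑ a : Fin n × Fin n × Fin n,
              v a * (φ a.1 p.1 * φ a.2.1 p.2.1 * φ a.2.2 p.2.2))^2 := by
      have e0 : dotProduct v (A.mulVec v) = ∑ a, ∑ b, v a * (A a b * v b) := by
        simp [dotProduct, Matrix.mulVec, Finset.mul_sum]
      rw [e0]
      rw [Finset.sum_congr rfl fun a _ => Finset.sum_congr rfl fun b _ => hterm a b]
      have e1 : ∀ a : Fin n × Fin n × Fin n,
          ∑ b : Fin n × Fin n × Fin n, (∫ p in (Set.Icc (0:ℝ) 1) ×ˢ (Set.Icc (0:ℝ) 1) ×ˢ (Set.Icc (0:ℝ) 1),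
            Sa p * ((v a * (φ a.1 p.1 * φ a.2.1 p.2.1 * φ a.2.2 p.2.2)) *
              (v b * (φ b.1 p.1 * φ b.2.1 p.2.1 * φ b.2.2 p.2.2))))
          = ∫ p in (Set.Icc (0:ℝ) 1) ×ˢ (Set.Icc (0:ℝ) 1) ×ˢ (Set.Icc (0:ℝ) 1),
            ∑ b : Fin n × Fin n × Fin n, Sa p * ((v a * (φ a.1 p.1 * φ a.2.1 p.2.1 * φ a.2.2 p.2.2)) *
              (v b * (φ b.1 p.1 * φ b.2.1 p.2.1 * φ b.2.2 p.2.2))) := fun a =>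
        (integral_finset_sum _ fun b _ => hint1 a b).symm
      rw [Finset.sum_congr rfl fun a _ => e1 a]
      rw [← integral_finset_sum _ (fun a _ => integrable_finset_sum _ fun b _ => hint1 a b)]
      refine integral_congr_ae (Filter.Eventually.of_forall fun p => ?_)
      show _ = Sa p * _
      rw [sq, Finset.sum_mul_sum, Finset.mul_sum]
      refine Finset.sum_congr rfl fun a _ => ?_
      rw [Finset.mul_sum]
    constructor
    · calc Smin * (h^3/27 * ∑ a : Fin n × Fin n × Fin n, v a ^ 2)
          ≤ Smin * ∫ p in (Set.Icc (0:ℝ) 1) ×ˢ (Set.Icc (0:ℝ) 1) ×ˢ (Set.Icc (0:ℝ) 1),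
              (∑ a : Fin n × Fin n × Fin n, v a * (φ a.1 p.1 * φ a.2.1 p.2.1 * φ a.2.2 p.2.2))^2 :=
            mul_le_mul_of_nonneg_left hJlb hSmin.le
        _ = ∫ p in (Set.Icc (0:ℝ) 1) ×ˢ (Set.Icc (0:ℝ) 1) ×ˢ (Set.Icc (0:ℝ) 1),
              Smin * (∑ a : Fin n × Fin n × Fin n, v a * (φ a.1 p.1 * φ a.2.1 p.2.1 * φ a.2.2 p.2.2))^2 :=
            (integral_const_mul _ _).symm
        _ ≤ dotProduct v (A.mulVec v) := by
            rw [hP]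
            refine setIntegral_mono_on
              ((continuous_const.mul (hucont.pow 2)).continuousOn.integrableOn_compact hcube_cpt)
              (hIntSa _ (hucont.pow 2)) hcube_meas fun p hp => ?_
            exact mul_le_mul_of_nonneg_right (hSa p hp).1 (sq_nonneg _)
    · calc dotProduct v (A.mulVec v)
          ≤ ∫ p in (Set.Icc (0:ℝ) 1) ×ˢ (Set.Icc (0:ℝ) 1) ×ˢ (Set.Icc (0:ℝ) 1),
              Smax * (∑ a : Fin n × Fin n × Fin n, v a * (φ a.1 p.1 * φ a.2.1 p.2.1 * φ a.2.2 p.2.2))^2 := by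
            rw [hP]
            refine setIntegral_mono_on (hIntSa _ (hucont.pow 2))
              ((continuous_const.mul (hucont.pow 2)).continuousOn.integrableOn_compact hcube_cpt)
              hcube_meas fun p hp => ?_
            exact mul_le_mul_of_nonneg_right (hSa p hp).2 (sq_nonneg _)
        _ = Smax * ∫ p in (Set.Icc (0:ℝ) 1) ×ˢ (Set.Icc (0:ℝ) 1) ×ˢ (Set.Icc (0:ℝ) 1),
              (∑ a : Fin n × Fin n × Fin n, v a * (φ a.1 p.1 * φ a.2.1 p.2.1 * φ a.2.2 p.2.2))^2 :=
            integral_const_mul _ _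
        _ ≤ Smax * (h^3 * ∑ a : Fin n × Fin n × Fin n, v a ^ 2) :=
            mul_le_mul_of_nonneg_left hJub hSmaxpos.le
  have hSsq : ∀ v : Fin n × Fin n × Fin n → ℝ, v ≠ 0 →
      0 < ∑ a : Fin n × Fin n × Fin n, v a ^ 2 := by
    intro v hv
    obtain ⟨a, ha⟩ := Function.ne_iff.1 hv
    exact Finset.sum_pos' (fun b _ => sq_nonneg _)
      ⟨a, Finset.mem_univ a, by have : v a ≠ 0 := ha; positivity⟩
  have hsymm : A.IsSymm := Matrix.IsSymm.ext fun a b => by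
    obtain ⟨i,j,k⟩ := a; obtain ⟨i',j',k'⟩ := b
    rw [hA, hA]
    exact integral_congr_ae (Filter.Eventually.of_forall fun p => by ring)
  have heig : ∀ (lam : ℝ) (v : Fin n × Fin n × Fin n → ℝ), v ≠ 0 → A.mulVec v = lam • v →
      Smin * h ^ 3 / 27 ≤ lam ∧ lam ≤ Smax * h ^ 3 := by
    intro lam v hv hev
    have hS := hSsq v hv
    have hPv : dotProduct v (A.mulVec v) = lam * ∑ a : Fin n × Fin n × Fin n, v a ^ 2 := by
      rw [hev, dotProduct_smul, smul_eq_mul]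
      congr 1
      simp [dotProduct, sq]
    obtain ⟨h1, h2⟩ := key v
    rw [hPv] at h1 h2
    constructor
    · have hle : Smin * h ^ 3 / 27 * (∑ a : Fin n × Fin n × Fin n, v a ^ 2)
          ≤ lam * (∑ a : Fin n × Fin n × Fin n, v a ^ 2) := by
        calc Smin * h ^ 3 / 27 * (∑ a : Fin n × Fin n × Fin n, v a ^ 2)
            = Smin * (h^3/27 * ∑ a : Fin n × Fin n × Fin n, v a ^ 2) := by ring
          _ ≤ _ := h1
      exact le_of_mul_le_mul_right hle hS
    · have hle : lam * (∑ a : Fin n × Fin n × Fin n, v a ^ 2)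
          ≤ Smax * h ^ 3 * (∑ a : Fin n × Fin n × Fin n, v a ^ 2) := by
        calc lam * (∑ a : Fin n × Fin n × Fin n, v a ^ 2) ≤
            Smax * (h^3 * ∑ a : Fin n × Fin n × Fin n, v a ^ 2) := h2
          _ = Smax * h ^ 3 * (∑ a : Fin n × Fin n × Fin n, v a ^ 2) := by ring
      exact le_of_mul_le_mul_right hle hS
  refine ⟨hsymm, Matrix.PosDef.of_dotProduct_mulVec_pos ?_ ?_, heig, ?_⟩
  · show Aᴴ = A
    rw [Matrix.conjTranspose_eq_transpose_of_trivial]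
    exact hsymm
  · intro x hx
    have hS := hSsq x hx
    have h1 := (key x).1
    calc (0:ℝ) < Smin * (h^3/27 * ∑ a : Fin n × Fin n × Fin n, x a ^ 2) := by positivity
      _ ≤ dotProduct x (A.mulVec x) := h1
      _ = dotProduct (star x) (A.mulVec x) := by rw [star_trivial]
  · intro lam mu v w hv hw hev hew
    have h1 := (heig lam v hv hev).2
    have h2 := (heig mu w hw hew).1
    have hq : 27 * (Smax/Smin) * (Smin * h^3 / 27) = Smax * h^3 := by
      field_simp
    calc lam ≤ Smax * h^3 := h1
      _ = 27 * (Smax/Smin) * (Smin * h^3 / 27) := hq.symm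
      _ ≤ 27 * (Smax/Smin) * mu := mul_le_mul_of_nonneg_left h2 (by positivity)
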